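/- Let x' = 1^k · x · 0^k where x has length n. If x' contains a substring of balance k+1 ending at position j ≥ k+n (0-indexed, i.e., ending within the trailing 0^k block), then either some prefix of x has negative balance or the total balance of x is nonzero. -/
import Mathlib


/-- Balance of a binary word: number of 0s (false) minus number of 1s (true). -/
def bal (s : List Bool) : ℤ := (s.count false : ℤ) - (s.count true : ℤ)

/-- The substring x[i..j] (inclusive, 0-indexed). -/
def sub (x : List Bool) (i j : ℕ) : List Bool := (x.drop i).take (j + 1 - i)

/-- x is a Dyck word of depth at most k: every prefix has balance in [0,k] and total balance 0. -/
def DyckBounded (x : List Bool) (k : ℕ) : Prop :=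
  (∀ p, p <+: x → 0 ≤ bal p ∧ bal p ≤ (k : ℤ)) ∧ bal x = 0


lemma bal_append (a b : List Bool) : bal (a ++ b) = bal a + bal b := by
  simp [bal, List.count_append]; ring

lemma bal_rep_true (m : ℕ) : bal (List.replicate m true) = -(m : ℤ) := by
  simp [bal, List.count_replicate]

lemma bal_rep_false (m : ℕ) : bal (List.replicate m false) = (m : ℤ) := by
  simp [bal, List.count_replicate]

/-- If x' = 1^k x 0^k has a substring of balance k+1 ending at position j ≥ k+n, then some
prefix of x has negative balance or the total balance of x is nonzero. -/
theorem plus_substring_in_tail (x : List Bool) (n k : ℕ) (hn : x.length = n)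
    (i j : ℕ) (hij : i ≤ j) (hj : j < n + 2 * k) (hjk : k + n ≤ j)
    (hbal : bal (sub (List.replicate k true ++ x ++ List.replicate k false) i j)
      = (k : ℤ) + 1) :
    (∃ p, p <+: x ∧ bal p < 0) ∨ bal x ≠ 0 := by
  by_contra hcon
  push_neg at hcon
  obtain ⟨h1, h2⟩ := hcon
  set x' := List.replicate k true ++ x ++ List.replicate k false with hx'
  -- key decomposition of take
  have htake : ∀ m : ℕ, x'.take m =
      List.replicate (min m k) true ++ x.take (m - k) ++
      List.replicate (min (m - (k + n)) k) false := by
    intro m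
    rw [hx', List.take_append, List.take_append,
      List.take_replicate]
    simp [hn]
  have hbal_take : ∀ m : ℕ, bal (x'.take m) =
      -((min m k : ℕ) : ℤ) + bal (x.take (m - k)) + ((min (m - (k + n)) k : ℕ) : ℤ) := by
    intro m
    rw [htake, bal_append, bal_append, bal_rep_true, bal_rep_false]
  have hsplit : x'.take (j + 1) = x'.take i ++ sub x' i j := by
    have h : j + 1 = i + (j + 1 - i) := by omega
    rw [h, List.take_add, sub]
  have hB : bal (x'.take (j + 1)) = bal (x'.take i) + ((k : ℤ) + 1) := by
    rw [hsplit, bal_append, hbal]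
  have e1 : bal (x'.take (j + 1)) =
      -(k : ℤ) + 0 + ((j + 1 - (k + n) : ℕ) : ℤ) := by
    rw [hbal_take]
    have : min (j + 1) k = k := by omega
    have h2' : j + 1 - k ≥ x.length := by omega
    rw [this, List.take_of_length_le h2', h2]
    have h3 : min (j + 1 - (k + n)) k = j + 1 - (k + n) := by omega
    rw [h3]
  have e2 : bal (x'.take i) ≥ -(k : ℤ) := by
    rw [hbal_take]
    have hp : 0 ≤ bal (x.take (i - k)) := h1 _ (List.take_prefix _ _)
    have a1 : ((min i k : ℕ) : ℤ) ≤ k := by exact_mod_cast Nat.min_le_right i k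
    have a2 : (0 : ℤ) ≤ ((min (i - (k + n)) k : ℕ) : ℤ) := by positivity
    linarith
  have e3 : ((j + 1 - (k + n) : ℕ) : ℤ) ≤ k := by
    have : j + 1 - (k + n) ≤ k := by omega
    exact_mod_cast this
  omega
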